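/- arXiv:1910.03013 — 2 statements merged into one kernel-verified Lean document; each statement's English description precedes it below -/
import Mathlib

section
/- Let N be an even positive integer with N ≥ 4, let R ≥ 0 be a real number, let A : ℕ → ℂ with A(0) real and nonnegative, and define J(τ) = ∑_{u=0}^{N/2−1} |A(u) + R·exp(i·2πτu/N)|² for integer τ. Then the quantity E := (1/N) ∑_{τ=1}^{N} J(τ) − ∑_{u₁=1}^{N/2−1} |A(u₁)|² − (N/2 − 1)·R² is nonnegative, and A(0) = √E − R. -/
open Real Complex Finset

private lemma icc_to_range (N : ℕ) (f : ℤ → ℂ) :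
    ∑ τ ∈ Finset.Icc (1:ℤ) (N:ℤ), f τ = ∑ t ∈ Finset.range N, f (t+1) := by
  induction N with
  | zero => simp
  | succ n ih =>
      rw [Finset.sum_range_succ, ← ih]
      push_cast
      have h : Finset.Icc (1:ℤ) ((n:ℤ)+1) = insert ((n:ℤ)+1) (Finset.Icc (1:ℤ) (n:ℤ)) := by
        ext x; simp only [Finset.mem_Icc, Finset.mem_insert]; omega
      rw [h, Finset.sum_insert (by simp)]
      ring

private lemma exp_sum_zero (N u : ℕ) (hu : 0 < u) (huN : u < N) :
    ∑ τ ∈ Finset.Icc (1:ℤ) (N:ℤ),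
      Complex.exp (-(Complex.I * ((2 * Real.pi * (τ:ℝ) * (u:ℝ) / (N:ℝ) : ℝ) : ℂ))) = 0 := by
  have hN : 0 < N := lt_trans hu huN
  have hNr : (N:ℝ) ≠ 0 := by positivity
  set x : ℂ := Complex.exp (-(Complex.I * ((2 * Real.pi * (u:ℝ) / (N:ℝ) : ℝ) : ℂ))) with hx
  have hterm : ∀ τ : ℤ, Complex.exp (-(Complex.I * ((2 * Real.pi * (τ:ℝ) * (u:ℝ) / (N:ℝ) : ℝ) : ℂ))) = x ^ τ := by
    intro τ
    rw [hx, ← Complex.exp_int_mul]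
    congr 1
    push_cast
    ring
  have hNc : (N:ℂ) ≠ 0 := by exact_mod_cast hNr
  have hxN : x ^ N = 1 := by
    rw [hx, ← Complex.exp_nat_mul, Complex.exp_eq_one_iff]
    refine ⟨-u, ?_⟩
    push_cast
    field_simp
  have hx1 : x ≠ 1 := by
    intro h
    rw [hx, Complex.exp_eq_one_iff] at h
    obtain ⟨n, hn⟩ := h
    have hc : -(2 * Real.pi * (u:ℝ) / (N:ℝ)) = (n:ℝ) * (2 * Real.pi) := by
      simpa using congrArg Complex.im hn
    have hN' : (0:ℝ) < N := by positivity
    have hu' : (0:ℝ) < u := by exact_mod_cast hu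
    have huN' : (u:ℝ) < N := by exact_mod_cast huN
    have hpi := Real.pi_pos
    field_simp at hc
    rcases le_or_gt 0 n with h0 | h0
    · have h0' : (0:ℝ) ≤ (n:ℝ) := by exact_mod_cast h0
      nlinarith [mul_nonneg (mul_nonneg h0' (by linarith : (0:ℝ) ≤ 2*Real.pi)) (le_of_lt hN')]
    · have h0' : (n:ℝ) ≤ -1 := by
        have : n ≤ -1 := by omega
        exact_mod_cast this
      nlinarith [mul_lt_mul_of_pos_left huN' (by linarith : (0:ℝ) < 2*Real.pi),
        mul_le_mul_of_nonneg_right (mul_le_mul_of_nonneg_right h0' (by linarith : (0:ℝ) ≤ 2*Real.pi)) (le_of_lt hN')]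
  rw [Finset.sum_congr rfl (fun τ _ => hterm τ), icc_to_range]
  have h2 : ∀ t : ℕ, x ^ ((t:ℤ)+1) = x * x ^ t := by
    intro t
    rw [show ((t:ℤ)+1) = ((t+1 : ℕ) : ℤ) by push_cast; ring, zpow_natCast, pow_succ']
  rw [Finset.sum_congr rfl (fun t _ => h2 t), ← Finset.mul_sum, geom_sum_eq hx1, hxN]
  simp

theorem stmt15 (N : ℕ) (hNeven : Even N) (hN : 4 ≤ N)
    (R : ℝ) (hR : 0 ≤ R) (A : ℕ → ℂ)
    (hA0im : (A 0).im = 0) (hA0re : 0 ≤ (A 0).re) (J : ℤ → ℝ)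
    (hJ : ∀ τ : ℤ, J τ = ∑ u ∈ Finset.range (N / 2), (‖A u + (R : ℂ) * Complex.exp (Complex.I * ((2 * Real.pi * (τ : ℝ) * (u : ℝ) / (N : ℝ) : ℝ) : ℂ))‖) ^ 2) :
    0 ≤ (1 / (N : ℝ)) * ∑ τ ∈ Finset.Icc (1 : ℤ) (N : ℤ), J τ - ∑ u₁ ∈ Finset.Icc 1 (N / 2 - 1), (‖A u₁‖) ^ 2 - ((N : ℝ) / 2 - 1) * R ^ 2 ∧
    A 0 = ((Real.sqrt ((1 / (N : ℝ)) * ∑ τ ∈ Finset.Icc (1 : ℤ) (N : ℤ), J τ - ∑ u₁ ∈ Finset.Icc 1 (N / 2 - 1), (‖A u₁‖) ^ 2 - ((N : ℝ) / 2 - 1) * R ^ 2) - R : ℝ) : ℂ) := by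
  set M := N / 2 with hM
  have hM2 : 2 ≤ M := by omega
  have hNM : N = 2 * M := by
    obtain ⟨k, hk⟩ := hNeven; omega
  have hNr : (N:ℝ) ≠ 0 := by positivity
  set a := (A 0).re with ha
  set S := ∑ u ∈ Finset.range M, Complex.normSq (A u) with hS
  -- pointwise expansion
  have hpt : ∀ (τ : ℤ) (u : ℕ),
      (‖A u + (R : ℂ) * Complex.exp (Complex.I * ((2 * Real.pi * (τ : ℝ) * (u : ℝ) / (N : ℝ) : ℝ) : ℂ))‖) ^ 2
      = Complex.normSq (A u) + R ^ 2
        + 2 * R * (A u * Complex.exp (-(Complex.I * ((2 * Real.pi * (τ : ℝ) * (u : ℝ) / (N : ℝ) : ℝ) : ℂ)))).re := by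
    intro τ u
    set c : ℝ := (2 * Real.pi * (τ : ℝ) * (u : ℝ) / (N : ℝ) : ℝ) with hc
    rw [Complex.sq_norm, Complex.normSq_add]
    have h1 : Complex.normSq ((R : ℂ) * Complex.exp (Complex.I * (c:ℂ))) = R ^ 2 := by
      rw [Complex.normSq_mul, Complex.normSq_eq_norm_sq, Complex.normSq_eq_norm_sq, Complex.norm_exp]
      simp [sq]
    have h2 : (starRingEnd ℂ) ((R : ℂ) * Complex.exp (Complex.I * (c:ℂ)))
        = (R : ℂ) * Complex.exp (-(Complex.I * (c:ℂ))) := by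
      rw [map_mul, Complex.conj_ofReal, ← Complex.exp_conj]
      congr 2
      simp [map_mul, Complex.conj_ofReal]
    rw [h1, h2]
    have h3 : A u * ((R:ℂ) * Complex.exp (-(Complex.I * (c:ℂ))))
        = (R:ℂ) * (A u * Complex.exp (-(Complex.I * (c:ℂ)))) := by ring
    rw [h3, Complex.re_ofReal_mul]
    ring
  -- sum over u of inner exp sums
  have hexp0 : ∀ τ : ℤ,
      Complex.exp (-(Complex.I * ((2 * Real.pi * (τ : ℝ) * ((0:ℕ) : ℝ) / (N : ℝ) : ℝ) : ℂ))) = 1 := by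
    intro τ; norm_num
  have hinner : ∀ u ∈ Finset.range M,
      ∑ τ ∈ Finset.Icc (1:ℤ) (N:ℤ),
        (A u * Complex.exp (-(Complex.I * ((2 * Real.pi * (τ : ℝ) * (u : ℝ) / (N : ℝ) : ℝ) : ℂ)))).re
      = if u = 0 then (N:ℝ) * a else 0 := by
    intro u hu
    rw [← Complex.re_sum, ← Finset.mul_sum]
    rcases Nat.eq_zero_or_pos u with h0 | h0
    · subst h0
      rw [Finset.sum_congr rfl (fun τ _ => hexp0 τ)]
      simp [ha, Complex.mul_re]
      ring
    · have huN : u < N := by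
        have := Finset.mem_range.mp hu; omega
      rw [if_neg (by omega), exp_sum_zero N u h0 huN]
      simp
  -- key total sum
  have hcard : (Finset.Icc (1:ℤ) (N:ℤ)).card = N := by
    rw [Int.card_Icc]; omega
  have key : ∑ τ ∈ Finset.Icc (1:ℤ) (N:ℤ), J τ
      = (N:ℝ) * S + (N:ℝ) * (M:ℝ) * R ^ 2 + 2 * R * ((N:ℝ) * a) := by
    calc ∑ τ ∈ Finset.Icc (1:ℤ) (N:ℤ), J τ
        = ∑ τ ∈ Finset.Icc (1:ℤ) (N:ℤ), ∑ u ∈ Finset.range M,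
          (Complex.normSq (A u) + R ^ 2
            + 2 * R * (A u * Complex.exp (-(Complex.I * ((2 * Real.pi * (τ : ℝ) * (u : ℝ) / (N : ℝ) : ℝ) : ℂ)))).re) := by
          refine Finset.sum_congr rfl (fun τ _ => ?_)
          rw [hJ τ]
          exact Finset.sum_congr rfl (fun u _ => hpt τ u)
      _ = ∑ u ∈ Finset.range M, ∑ τ ∈ Finset.Icc (1:ℤ) (N:ℤ),
          (Complex.normSq (A u) + R ^ 2
            + 2 * R * (A u * Complex.exp (-(Complex.I * ((2 * Real.pi * (τ : ℝ) * (u : ℝ) / (N : ℝ) : ℝ) : ℂ)))).re) :=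
          Finset.sum_comm
      _ = ∑ u ∈ Finset.range M, ((N:ℝ) * (Complex.normSq (A u) + R ^ 2)
            + 2 * R * (if u = 0 then (N:ℝ) * a else 0)) := by
          refine Finset.sum_congr rfl (fun u hu => ?_)
          rw [Finset.sum_add_distrib, Finset.sum_const, hcard, ← Finset.mul_sum, hinner u hu]
          push_cast
          ring
      _ = (N:ℝ) * S + (N:ℝ) * (M:ℝ) * R ^ 2 + 2 * R * ((N:ℝ) * a) := by
          rw [Finset.sum_add_distrib]
          have e1 : ∑ x ∈ Finset.range M, 2 * R * (if x = 0 then (N:ℝ)*a else 0) = 2 * R * ((N:ℝ)*a) := by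
            rw [← Finset.mul_sum, Finset.sum_ite_eq' (Finset.range M) 0 (fun _ => (N:ℝ)*a),
              if_pos (Finset.mem_range.mpr (by omega))]
          have e2 : ∑ x ∈ Finset.range M, (N:ℝ) * (Complex.normSq (A x) + R^2) = (N:ℝ)*S + (N:ℝ)*(M:ℝ)*R^2 := by
            rw [← Finset.mul_sum, Finset.sum_add_distrib, Finset.sum_const, Finset.card_range, ← hS]
            push_cast
            ring
          rw [e1, e2]
  -- the subtracted sum
  have hsub : ∑ u₁ ∈ Finset.Icc 1 (M - 1), (‖A u₁‖) ^ 2 = S - a ^ 2 := by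
    have h1 : Finset.Icc 1 (M-1) = Finset.Ico 1 M := by
      rw [← Finset.Ico_add_one_right_eq_Icc]
      congr 1
      omega
    have h2 : S = Complex.normSq (A 0) + ∑ u ∈ Finset.Ico 1 M, Complex.normSq (A u) := by
      rw [hS, Finset.range_eq_Ico, Finset.sum_eq_sum_Ico_succ_bot (by omega : 0 < M)]
    have h3 : Complex.normSq (A 0) = a ^ 2 := by
      rw [Complex.normSq_apply, hA0im]; ring
    rw [h1, h2, h3]
    have : ∀ u, (‖A u‖)^2 = Complex.normSq (A u) := fun u => Complex.sq_norm _
    simp_rw [this]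
    ring
  have hMr : (M:ℝ) = (N:ℝ)/2 := by
    field_simp
    exact_mod_cast (by omega : M * 2 = N)
  have hE : (1 / (N : ℝ)) * ∑ τ ∈ Finset.Icc (1 : ℤ) (N : ℤ), J τ
      - ∑ u₁ ∈ Finset.Icc 1 (M - 1), (‖A u₁‖) ^ 2 - ((N : ℝ) / 2 - 1) * R ^ 2
      = (a + R) ^ 2 := by
    rw [key, hsub, ← hMr]
    field_simp
    ring
  rw [hE]
  constructor
  · positivity
  · rw [Real.sqrt_sq (by positivity)]
    apply Complex.ext
    · simp [ha]
    · simp [hA0im]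
end

section
/- Let N be an even positive integer with N ≥ 4, let R be a real number, let A : ℕ → ℂ, and define J(τ) = ∑_{u=0}^{N/2−1} |A(u) + R·exp(i·2πτu/N)|² for integer τ (including negative τ). Then for every integer u with 1 ≤ u ≤ N/2 − 1, R·A(u) = (1/N) ∑_{τ=−N/2}^{N/2−1} J(τ) exp(i·2πτu/N). -/
open Real Complex Finset

noncomputable def EE (N : ℕ) (k : ℤ) : ℂ :=
  Complex.exp (Complex.I * (2 * (Real.pi : ℂ) * (k : ℂ) / (N : ℂ)))

lemma EE_add (N : ℕ) (k l : ℤ) : EE N (k + l) = EE N k * EE N l := by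
  rw [EE, EE, EE, ← Complex.exp_add]
  congr 1
  push_cast
  ring

lemma EE_zero (N : ℕ) : EE N 0 = 1 := by simp [EE]

lemma EE_conj (N : ℕ) (k : ℤ) : (starRingEnd ℂ) (EE N k) = EE N (-k) := by
  rw [EE, EE, ← Complex.exp_conj]
  congr 1
  simp only [map_mul, map_div₀, Complex.conj_I, Complex.conj_ofReal, map_ofNat,
    map_intCast, map_natCast]
  push_cast
  ring

lemma EE_zpow (N : ℕ) (τ k : ℤ) : EE N (τ * k) = (EE N k) ^ τ := by
  rw [EE, EE, ← Complex.exp_int_mul]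
  congr 1
  push_cast
  ring

lemma EE_eq_one_iff (N : ℕ) (hN : N ≠ 0) (k : ℤ) : EE N k = 1 ↔ (N : ℤ) ∣ k := by
  have hNne : (N : ℂ) ≠ 0 := Nat.cast_ne_zero.mpr hN
  have hpi : (Real.pi : ℂ) ≠ 0 := by exact_mod_cast Real.pi_ne_zero
  have hI : Complex.I ≠ 0 := Complex.I_ne_zero
  rw [EE, Complex.exp_eq_one_iff]
  constructor
  · rintro ⟨n, hn⟩
    refine ⟨n, ?_⟩
    have h3 : (2 : ℂ) * Real.pi * Complex.I ≠ 0 := by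
      simp [hpi, hI]
    have h4 : (2 : ℂ) * Real.pi * Complex.I * ((k : ℂ) / N)
        = (2 : ℂ) * Real.pi * Complex.I * n := by linear_combination hn
    have h5 : (k : ℂ) = (n : ℂ) * N := (div_eq_iff hNne).1 (mul_left_cancel₀ h3 h4)
    have h6 : (k : ℂ) = ((N : ℤ) * n : ℤ) := by push_cast; linear_combination h5
    exact_mod_cast h6
  · rintro ⟨c, rfl⟩
    refine ⟨c, ?_⟩
    push_cast
    field_simp

lemma key (N : ℕ) (hNe : Even N) (hN : 0 < N) (k : ℤ) :
    ∑ τ ∈ Finset.Icc (-((N : ℤ) / 2)) ((N : ℤ) / 2 - 1), EE N (τ * k)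
      = if (N : ℤ) ∣ k then (N : ℂ) else 0 := by
  obtain ⟨t, ht⟩ := hNe
  have hm : 2 * ((N : ℤ) / 2) = N := by omega
  set m : ℤ := (N : ℤ) / 2 with hmdef
  set z := EE N k with hz_def
  have hz : z ≠ 0 := Complex.exp_ne_zero _
  have hmap : Finset.Icc (-m) (m - 1)
      = Finset.map ⟨fun j : ℕ => (j : ℤ) - m, fun a b h => by have : (a : ℤ) - m = (b : ℤ) - m := h; omega⟩ (Finset.range N) := by
    ext x
    simp only [Finset.mem_Icc, Finset.mem_map, Finset.mem_range, Function.Embedding.coeFn_mk]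
    constructor
    · intro hx
      exact ⟨(x + m).toNat, by omega, by show (((x + m).toNat : ℕ) : ℤ) - m = x; omega⟩
    · rintro ⟨j, hj, rfl⟩
      show -m ≤ (j : ℤ) - m ∧ (j : ℤ) - m ≤ m - 1
      omega
  have hsum : ∑ τ ∈ Finset.Icc (-m) (m - 1), EE N (τ * k)
      = (∑ j ∈ Finset.range N, z ^ j) * z ^ (-m) := by
    rw [hmap, Finset.sum_map, Finset.sum_mul]
    refine Finset.sum_congr rfl fun j _ => ?_
    show EE N (((j : ℤ) - m) * k) = z ^ j * z ^ (-m)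
    rw [EE_zpow, ← hz_def, sub_eq_add_neg, zpow_add₀ hz, zpow_natCast]
  rw [hsum]
  by_cases hdvd : (N : ℤ) ∣ k
  · have h1 : z = 1 := (EE_eq_one_iff N hN.ne' k).2 hdvd
    simp [h1, hdvd]
  · have h1 : z ≠ 1 := fun h => hdvd ((EE_eq_one_iff N hN.ne' k).1 h)
    have hzN : z ^ N = 1 := by
      rw [← zpow_natCast, ← EE_zpow, EE]
      have harg : Complex.I * (2 * (Real.pi : ℂ) * (((N : ℤ) * k : ℤ) : ℂ) / (N : ℂ))
          = (k : ℤ) * (2 * (Real.pi : ℂ) * Complex.I) := by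
        have hNne : (N : ℂ) ≠ 0 := Nat.cast_ne_zero.mpr hN.ne'
        push_cast
        field_simp
      rw [harg, Complex.exp_int_mul, Complex.exp_two_pi_mul_I, one_zpow]
    rw [geom_sum_eq h1, hzN]
    simp [hdvd]

theorem stmt18 (N : ℕ) (hNeven : Even N) (hN : 4 ≤ N)
    (R : ℝ) (A : ℕ → ℂ) (J : ℤ → ℝ)
    (hJ : ∀ τ : ℤ, J τ = ∑ u ∈ Finset.range (N / 2), ‖A u + (R : ℂ) * Complex.exp (Complex.I * ((2 * Real.pi * (τ : ℝ) * (u : ℝ) / (N : ℝ) : ℝ) : ℂ))‖ ^ 2)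
    (u : ℕ) (hu1 : 1 ≤ u) (hu2 : u ≤ N / 2 - 1) :
    (R : ℂ) * A u = (1 / (N : ℂ)) * ∑ τ ∈ Finset.Icc (-((N : ℤ) / 2)) ((N : ℤ) / 2 - 1),
      (J τ : ℂ) * Complex.exp (Complex.I * ((2 * Real.pi * (τ : ℝ) * (u : ℝ) / (N : ℝ) : ℝ) : ℂ)) := by
  have hN0 : (N : ℂ) ≠ 0 := Nat.cast_ne_zero.mpr (by omega)
  have hEcast : ∀ (τ : ℤ) (v : ℕ),
      Complex.exp (Complex.I * ((2 * Real.pi * (τ : ℝ) * (v : ℝ) / (N : ℝ) : ℝ) : ℂ))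
        = EE N (τ * v) := by
    intro τ v
    rw [EE]
    congr 1
    push_cast
    ring
  have hS := key N hNeven (by omega)
  have hEcast2 : ∀ (τ : ℤ) (v : ℕ),
      Complex.exp (Complex.I * (2 * (Real.pi : ℂ) * (τ : ℂ) * (v : ℂ) / (N : ℂ)))
        = EE N (τ * v) := by
    intro τ v
    rw [EE]
    congr 1
    push_cast
    ring
  have hJ' : ∀ τ : ℤ, (J τ : ℂ) = ∑ v ∈ Finset.range (N / 2),
      (A v * (starRingEnd ℂ) (A v) + (R : ℂ) ^ 2
        + (R : ℂ) * A v * EE N (-(τ * v)) + (R : ℂ) * (starRingEnd ℂ) (A v) * EE N (τ * v)) := by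
    intro τ
    rw [hJ τ]
    push_cast
    refine Finset.sum_congr rfl fun v _ => ?_
    rw [hEcast2 τ v]
    have h1 : EE N (τ * v) * EE N (-(τ * v)) = 1 := by
      rw [← EE_add, add_neg_cancel, EE_zero]
    have hconj : (starRingEnd ℂ) (A v + (R : ℂ) * EE N (τ * v))
        = (starRingEnd ℂ) (A v) + (R : ℂ) * EE N (-(τ * v)) := by
      simp [map_add, map_mul, Complex.conj_ofReal, EE_conj]
    rw [← Complex.ofReal_pow, Complex.sq_norm, ← Complex.mul_conj, hconj]
    linear_combination (R : ℂ) ^ 2 * h1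
  have hu_mem : u ∈ Finset.range (N / 2) := Finset.mem_range.mpr (by omega)
  have hmain : ∑ τ ∈ Finset.Icc (-((N : ℤ) / 2)) ((N : ℤ) / 2 - 1),
      (J τ : ℂ) * Complex.exp (Complex.I * ((2 * Real.pi * (τ : ℝ) * (u : ℝ) / (N : ℝ) : ℝ) : ℂ))
      = (N : ℂ) * ((R : ℂ) * A u) := by
    have step1 : ∀ τ : ℤ, (J τ : ℂ) * Complex.exp (Complex.I * ((2 * Real.pi * (τ : ℝ) * (u : ℝ) / (N : ℝ) : ℝ) : ℂ))
        = ∑ v ∈ Finset.range (N / 2),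
          ((A v * (starRingEnd ℂ) (A v) + (R : ℂ) ^ 2) * EE N (τ * (u : ℤ))
            + ((R : ℂ) * A v) * EE N (τ * ((u : ℤ) - v))
            + ((R : ℂ) * (starRingEnd ℂ) (A v)) * EE N (τ * ((u : ℤ) + v))) := by
      intro τ
      rw [hJ' τ, hEcast τ u, Finset.sum_mul]
      refine Finset.sum_congr rfl fun v _ => ?_
      have e1 : EE N (-(τ * v)) * EE N (τ * u) = EE N (τ * ((u : ℤ) - v)) := by
        rw [← EE_add]
        congr 1
        ring
      have e2 : EE N (τ * v) * EE N (τ * u) = EE N (τ * ((u : ℤ) + v)) := by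
        rw [← EE_add]
        congr 1
        ring
      linear_combination (R : ℂ) * A v * e1 + (R : ℂ) * (starRingEnd ℂ) (A v) * e2
    calc ∑ τ ∈ Finset.Icc (-((N : ℤ) / 2)) ((N : ℤ) / 2 - 1),
        (J τ : ℂ) * Complex.exp (Complex.I * ((2 * Real.pi * (τ : ℝ) * (u : ℝ) / (N : ℝ) : ℝ) : ℂ))
        = ∑ τ ∈ Finset.Icc (-((N : ℤ) / 2)) ((N : ℤ) / 2 - 1), ∑ v ∈ Finset.range (N / 2),
          ((A v * (starRingEnd ℂ) (A v) + (R : ℂ) ^ 2) * EE N (τ * (u : ℤ))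
            + ((R : ℂ) * A v) * EE N (τ * ((u : ℤ) - v))
            + ((R : ℂ) * (starRingEnd ℂ) (A v)) * EE N (τ * ((u : ℤ) + v))) :=
          Finset.sum_congr rfl fun τ _ => step1 τ
      _ = ∑ v ∈ Finset.range (N / 2), ∑ τ ∈ Finset.Icc (-((N : ℤ) / 2)) ((N : ℤ) / 2 - 1),
          ((A v * (starRingEnd ℂ) (A v) + (R : ℂ) ^ 2) * EE N (τ * (u : ℤ))
            + ((R : ℂ) * A v) * EE N (τ * ((u : ℤ) - v))
            + ((R : ℂ) * (starRingEnd ℂ) (A v)) * EE N (τ * ((u : ℤ) + v))) := Finset.sum_comm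
      _ = ∑ v ∈ Finset.range (N / 2), (if v = u then (N : ℂ) * ((R : ℂ) * A u) else 0) := by
          refine Finset.sum_congr rfl fun v hv => ?_
          have hv' : v < N / 2 := Finset.mem_range.mp hv
          rw [Finset.sum_add_distrib, Finset.sum_add_distrib,
            ← Finset.mul_sum, ← Finset.mul_sum, ← Finset.mul_sum,
            hS ((u : ℤ)), hS ((u : ℤ) - v), hS ((u : ℤ) + v)]
          have h0 : ¬ (N : ℤ) ∣ (u : ℤ) := by
            intro h
            have := Int.le_of_dvd (by omega) h
            omega
          have h2 : ¬ (N : ℤ) ∣ ((u : ℤ) + v) := by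
            intro h
            have := Int.le_of_dvd (by omega) h
            omega
          rw [if_neg h0, if_neg h2]
          by_cases hvu : v = u
          · subst hvu
            rw [if_pos (by simp)]
            rw [if_pos rfl]
            ring
          · have h1 : ¬ (N : ℤ) ∣ ((u : ℤ) - v) := by
              intro h
              rcases lt_trichotomy ((u : ℤ) - v) 0 with h1 | h1 | h1
              · have := Int.le_of_dvd (by omega) ((dvd_neg).2 h)
                omega
              · omega
              · have := Int.le_of_dvd h1 h
                omega
            rw [if_neg h1, if_neg hvu]
            ring
      _ = (N : ℂ) * ((R : ℂ) * A u) := by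
          rw [Finset.sum_ite_eq' (Finset.range (N / 2)) u (fun _ => (N : ℂ) * ((R : ℂ) * A u))]
          simp [hu_mem]
  rw [hmain, one_div, inv_mul_cancel_left₀ hN0]
end
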